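/- For every integer s < 0 and every d ≥ 0, one has the identity S_d(s) = (−1)^d · Σ_{(m_0, …, m_d) ∈ U_d(−s)} C(−s; m_0, …, m_d) · t^{wt(m)} in A, where C(−s; m_0, …, m_d) = (−s)!/(m_0! ⋯ m_d!) is the multinomial coefficient reduced modulo p; moreover every multinomial coefficient appearing in this sum is nonzero modulo p (by Lucas' theorem, since the m_i sum to −s with no base-p carrying). -/

import Mathlib

open Polynomial

/-- The power sum `S_d(-k) = ∑_{a monic, deg a = d} a^k`, written as a sum over the
lower-order coefficients of the monic polynomial. -/
noncomputable def powerSum (Fq : Type) [Field Fq] [Fintype Fq] (d k : ℕ) : Polynomial Fq :=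
  ∑ c : Fin d → Fq, (X ^ d + ∑ i : Fin d, C (c i) * X ^ (i : ℕ)) ^ k

/-- `m` sums to `k` with no carrying of digits in base `p`. -/
def NoCarry (p : ℕ) {n : ℕ} (m : Fin n → ℕ) (k : ℕ) : Prop :=
  (∑ i, m i) = k ∧ ∀ j : ℕ, (∑ i, m i / p ^ j % p) = k / p ^ j % p

/-- The set `U_d(k)`. -/
def Uset (p q d k : ℕ) : Set (Fin (d + 1) → ℕ) :=
  {m | NoCarry p m k ∧ ∀ i : Fin (d + 1), 0 < (i : ℕ) → 0 < m i ∧ (q - 1) ∣ m i}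

/-- The weight of an element of `U_d(k)`. -/
def wtU {d : ℕ} (m : Fin (d + 1) → ℕ) : ℕ :=
  ∑ i : Fin (d + 1), (d - (i : ℕ)) * m i

/-- Strict lexicographic order on tuples. -/
def LexLT {n : ℕ} (x y : Fin n → ℕ) : Prop :=
  ∃ i, (∀ j, j < i → x j = y j) ∧ x i < y i

/-- Lexicographic order on tuples. -/
def LexLE {n : ℕ} (x y : Fin n → ℕ) : Prop := x = y ∨ LexLT x y

/-- `L_k := min_{0 ≤ i < f} l(k p^i)/(q-1)` where `l` is the base-`q` digit sum, `q = p^f`. -/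
noncomputable def Lval (p f k : ℕ) (hf : 0 < f) : ℚ :=
  (Finset.range f).inf' ⟨0, Finset.mem_range.mpr hf⟩
    (fun i => ((Nat.digits (p ^ f) (k * p ^ i)).sum : ℚ) / ((p : ℚ) ^ f - 1))

/-- The set `W_d(N)` of compositions. -/
def Wset (p q d N : ℕ) : Set (Fin d → ℕ) :=
  {Y | NoCarry p Y N ∧ ∀ i : Fin d, (i : ℕ) + 1 < d → 0 < Y i ∧ (q - 1) ∣ Y i}

/-- The weight of a composition. -/
def wtW {d : ℕ} (Y : Fin d → ℕ) : ℕ := ∑ i : Fin d, ((i : ℕ) + 1) * Y i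

/-- `X` is the modest (lexicographically largest) composition in `W_d(N)`. -/
def Modest (p q : ℕ) {d : ℕ} (N : ℕ) (X : Fin d → ℕ) : Prop :=
  X ∈ Wset p q d N ∧ ∀ Y ∈ Wset p q d N, LexLE Y X

/-- `X` is an optimal (minimum weight) composition in `W_d(N)`. -/
def Optimal (p q : ℕ) {d : ℕ} (N : ℕ) (X : Fin d → ℕ) : Prop :=
  X ∈ Wset p q d N ∧ ∀ Y ∈ Wset p q d N, wtW X ≤ wtW Y

/-- `Γ(n) : Fin f → ℕ`, summing the base-`p` digits of `n` in each residue class mod `f`. -/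
def Gamma (p f n : ℕ) : Fin f → ℕ :=
  fun i => ∑ j ∈ Finset.range (Nat.log p n + 1), if j % f = (i : ℕ) then n / p ^ j % p else 0

/-- The cyclic matrix `E`, as a map: `(E x)_i = p x_{i+1} - x_i`, indices mod `f`. -/
def Emap (p : ℕ) {R : Type} [Ring R] {f : ℕ} (x : Fin f → R) : Fin f → R :=
  fun i => (p : R) * x ⟨((i : ℕ) + 1) % f, Nat.mod_lt _ i.pos⟩ - x i

/-- `𝔍 = {Γ(n) : n > 0 is q-even}`, where `q = p ^ f`. -/
def Jfrak (p f : ℕ) : Set (Fin f → ℕ) :=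
  {w | ∃ n : ℕ, 0 < n ∧ (p ^ f - 1) ∣ n ∧ Gamma p f n = w}

/-- `I_d`. -/
def Iset (p f d : ℕ) : Set (Fin f → ℕ) :=
  {u | (∃ n : ℕ, 0 < n ∧ Gamma p f n = u) ∧
    ∃ v : Fin (d - 1) → Fin f → ℕ, (∀ j, v j ∈ Jfrak p f) ∧ (∑ j, v j) < u}

/-- `J_d`. -/
def Jset (p f d : ℕ) : Set (Fin f → ℕ) :=
  if d = 0 then ∅ else Jfrak p f ∩ (Iset p f d \ Iset p f (d + 1))

/-- A composition is `τ`-monotonic. -/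
def TauMonotonic (p f : ℕ) {d : ℕ} (X : Fin d → ℕ) : Prop :=
  ∀ i j : Fin d, i < j → ∀ m n : ℕ, X i / p ^ m % p ≠ 0 → X j / p ^ n % p ≠ 0 →
    m % f = n % f → n ≤ m

/-- `W_d^B(N)`: compositions in `W_d(N)` whose `Γ`-matrix is `B`. -/
def WBset (p f d N : ℕ) (B : Fin d → Fin f → ℕ) : Set (Fin d → ℕ) :=
  {Y | Y ∈ Wset p (p ^ f) d N ∧ ∀ j, Gamma p f (Y j) = B j}

/-- The multizeta value `ζ(-k_1, …, -k_r)` as a (finite) sum over strictly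
decreasing tuples of degrees. -/
noncomputable def multizeta (Fq : Type) [Field Fq] [Fintype Fq] {r : ℕ} (k : Fin r → ℕ) :
    Polynomial Fq :=
  ∑ᶠ (dt : Fin r → ℕ) (_ : StrictAnti dt), ∏ i, powerSum Fq (dt i) (k i)

section Helpers
open Finset Polynomial

lemma padic_prod {p : ℕ} [Fact p.Prime] {ι : Type*} (s : Finset ι) (f : ι → ℕ)
    (hf : ∀ i ∈ s, f i ≠ 0) :
    padicValNat p (∏ i ∈ s, f i) = ∑ i ∈ s, padicValNat p (f i) := by
  induction s using Finset.cons_induction with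
  | empty => simp
  | cons a s ha ih =>
    rw [Finset.prod_cons, Finset.sum_cons,
      padicValNat.mul (hf a (Finset.mem_cons_self a s))
        (Finset.prod_ne_zero_iff.2 fun i hi => hf i (Finset.mem_cons_of_mem hi)),
      ih fun i hi => hf i (Finset.mem_cons_of_mem hi)]

lemma sum_div_le {n c : ℕ} (hc : 0 < c) (m : Fin n → ℕ) :
    (∑ i, m i / c) ≤ (∑ i, m i) / c := by
  rw [Nat.le_div_iff_mul_le hc, Finset.sum_mul]
  exact Finset.sum_le_sum fun i _ => Nat.div_mul_le_self _ _

lemma mult_dvd_iff_div (p : ℕ) (hp : p.Prime) {n : ℕ} (m : Fin n → ℕ) :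
    (¬ p ∣ Nat.multinomial Finset.univ m) ↔
      ∀ j : ℕ, (∑ i, m i / p ^ j) = (∑ i, m i) / p ^ j := by
  haveI : Fact p.Prime := ⟨hp⟩
  set k := ∑ i, m i with hk
  set b := k + 1 with hb
  have hmk : ∀ i, m i ≤ k := fun i =>
    Finset.single_le_sum (f := m) (fun _ _ => Nat.zero_le _) (Finset.mem_univ i)
  have hmult0 : Nat.multinomial Finset.univ m ≠ 0 := (Nat.multinomial_pos _ _).ne'
  have hspec := Nat.multinomial_spec Finset.univ m
  have hv : (∑ i, padicValNat p ((m i).factorial)) + padicValNat p (Nat.multinomial Finset.univ m)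
      = padicValNat p k.factorial := by
    rw [hk, ← hspec,
      padicValNat.mul (Finset.prod_ne_zero_iff.2 fun i _ => (Nat.factorial_pos _).ne') hmult0,
      padic_prod _ _ fun i _ => (Nat.factorial_pos _).ne']
  have hvfac : ∀ a : ℕ, a ≤ k → padicValNat p a.factorial = ∑ j ∈ Finset.Ico 1 b, a / p ^ j :=
    fun a ha => padicValNat_factorial
      (lt_of_le_of_lt ((Nat.log_le_self p a).trans ha) (Nat.lt_succ_self k))
  have hsumv : (∑ i, padicValNat p ((m i).factorial)) = ∑ j ∈ Finset.Ico 1 b, ∑ i, m i / p ^ j := by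
    rw [Finset.sum_congr rfl fun i _ => hvfac (m i) (hmk i)]
    exact Finset.sum_comm
  have hterm : ∀ j ∈ Finset.Ico 1 b, (∑ i, m i / p ^ j) ≤ k / p ^ j :=
    fun j _ => hk ▸ sum_div_le (pow_pos hp.pos j) m
  have hbig : ∀ j : ℕ, b ≤ j → ((∑ i, m i / p ^ j) = k / p ^ j) := by
    intro j hj
    have hkj : k < p ^ j := lt_of_lt_of_le (Nat.lt_two_pow_self (n := k))
      (le_trans (Nat.pow_le_pow_right (by norm_num) (le_trans (Nat.le_succ k) hj))
        (Nat.pow_le_pow_left hp.two_le j))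
    rw [Nat.div_eq_of_lt hkj]
    exact Finset.sum_eq_zero fun i _ => Nat.div_eq_of_lt (lt_of_le_of_lt (hmk i) hkj)
  constructor
  · intro hnd j
    have h0 : padicValNat p (Nat.multinomial Finset.univ m) = 0 :=
      padicValNat.eq_zero_of_not_dvd hnd
    have heq : ∑ j ∈ Finset.Ico 1 b, (∑ i, m i / p ^ j) = ∑ j ∈ Finset.Ico 1 b, k / p ^ j := by
      rw [← hsumv, ← hvfac k le_rfl]
      omega
    have hall := (Finset.sum_eq_sum_iff_of_le hterm).mp heq
    rcases Nat.eq_zero_or_pos j with rfl | hj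
    · simp [hk]
    by_cases hjb : j < b
    · exact hall j (Finset.mem_Ico.2 ⟨hj, hjb⟩)
    · exact hbig j (le_of_not_gt hjb)
  · intro h
    have : padicValNat p (Nat.multinomial Finset.univ m) = 0 := by
      have : (∑ i, padicValNat p ((m i).factorial)) = padicValNat p k.factorial := by
        rw [hsumv, hvfac k le_rfl]
        exact Finset.sum_congr rfl fun j _ => h j
      omega
    intro hdvd
    exact ((dvd_iff_padicValNat_ne_zero hmult0).mp hdvd) this
lemma div_iff_digit (p : ℕ) (hp : 2 ≤ p) {n : ℕ} (m : Fin n → ℕ) (k : ℕ)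
    (hsum : (∑ i, m i) = k) :
    (∀ j : ℕ, (∑ i, m i / p ^ j) = k / p ^ j) ↔
      (∀ j : ℕ, (∑ i, m i / p ^ j % p) = k / p ^ j % p) := by
  have key : ∀ (x j : ℕ), x / p ^ j % p + p * (x / p ^ (j + 1)) = x / p ^ j := by
    intro x j
    rw [pow_succ, ← Nat.div_div_eq_div_mul]
    exact Nat.mod_add_div _ _
  have keysum : ∀ j : ℕ,
      (∑ i, m i / p ^ j % p) + p * (∑ i, m i / p ^ (j + 1)) = ∑ i, m i / p ^ j := by
    intro j
    rw [Finset.mul_sum, ← Finset.sum_add_distrib]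
    exact Finset.sum_congr rfl fun i _ => key (m i) j
  constructor
  · intro hdiv j
    have h1 := hdiv j
    have h2 := hdiv (j + 1)
    have h3 := keysum j
    have h4 := key k j
    rw [h2] at h3
    omega
  · intro hdig
    have hbig : ∀ j : ℕ, k < p ^ j → (∑ i, m i / p ^ j) = k / p ^ j := by
      intro j hj
      rw [Nat.div_eq_of_lt hj]
      refine Finset.sum_eq_zero fun i _ => Nat.div_eq_of_lt ?_
      exact lt_of_le_of_lt
        (hsum ▸ Finset.single_le_sum (f := m) (fun _ _ => Nat.zero_le _) (Finset.mem_univ i)) hj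
    have step : ∀ j : ℕ, (∑ i, m i / p ^ (j + 1)) = k / p ^ (j + 1) →
        (∑ i, m i / p ^ j) = k / p ^ j := by
      intro j hnext
      have h3 := keysum j
      have h4 := key k j
      have h5 := hdig j
      rw [hnext] at h3
      omega
    have main : ∀ t j : ℕ, k < p ^ (j + t) → (∑ i, m i / p ^ j) = k / p ^ j := by
      intro t
      induction t with
      | zero => exact fun j hj => hbig j hj
      | succ t ih =>
        intro j hj
        exact step j (ih (j + 1) (by rwa [Nat.add_right_comm]))
    intro j
    refine main (k + 1) j ?_
    calc k < 2 ^ k := Nat.lt_two_pow_self (n := k)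
    _ ≤ 2 ^ (j + (k + 1)) := Nat.pow_le_pow_right (by norm_num) (by omega)
    _ ≤ p ^ (j + (k + 1)) := Nat.pow_le_pow_left hp _

lemma multinomial_comp_equiv {n : ℕ} (m : Fin n → ℕ) (e : Equiv.Perm (Fin n)) :
    Nat.multinomial Finset.univ (m ∘ e) = Nat.multinomial Finset.univ m := by
  unfold Nat.multinomial
  simp only [Function.comp_apply]
  rw [Equiv.sum_comp e m, Equiv.prod_comp e (fun x => (m x).factorial)]

lemma charSum (Fq : Type) [Field Fq] [Fintype Fq] (e : ℕ) :
    (∑ x : Fq, x ^ e) = if e ≠ 0 ∧ (Fintype.card Fq - 1) ∣ e then -1 else 0 := by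
  classical
  rcases eq_or_ne e 0 with rfl | he
  · simp [FiniteField.cast_card_eq_zero Fq]
  · let φ : Fqˣ ↪ Fq := ⟨fun x ↦ x, Units.val_injective⟩
    have huniv : Finset.univ.map φ = Finset.univ \ {0} := by
      ext x
      simp only [Finset.mem_map, Finset.mem_univ, Function.Embedding.coeFn_mk, true_and,
        Finset.mem_sdiff, Finset.mem_singleton, φ]
      exact isUnit_iff_ne_zero
    have h1 : ∑ x : Fq, x ^ e = ∑ x ∈ Finset.univ \ {(0 : Fq)}, x ^ e := by
      rw [← Finset.sum_sdiff (({0} : Finset Fq).subset_univ), Finset.sum_singleton,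
        zero_pow he, add_zero]
    rw [h1, ← huniv, Finset.sum_map]
    have h2 : ∑ x : Fqˣ, ((x : Fq)) ^ e = if Fintype.card Fq - 1 ∣ e then -1 else 0 :=
      FiniteField.sum_pow_units Fq e
    simp only [Function.Embedding.coeFn_mk, φ]
    rw [h2]
    simp [he]

lemma mult_iff_noCarry (p : ℕ) (hp : p.Prime) {n : ℕ} (m : Fin n → ℕ) (k : ℕ)
    (hsum : (∑ i, m i) = k) :
    (¬ p ∣ Nat.multinomial Finset.univ m) ↔ NoCarry p m k := by
  rw [mult_dvd_iff_div p hp m, hsum, NoCarry,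
    div_iff_digit p hp.two_le m k hsum]
  simp [hsum]

lemma prod_ite_eq_pow {Fq : Type} [Field Fq] {d : ℕ} (P : Fin d → Prop) [DecidablePred P] :
    (∏ j : Fin d, if P j then (-1 : Fq) else 0) = if (∀ j, P j) then (-1 : Fq) ^ d else 0 := by
  by_cases hall : ∀ j, P j
  · rw [if_pos hall, Finset.prod_congr rfl fun j _ => if_pos (hall j)]
    simp
  · rw [if_neg hall]
    push_neg at hall; obtain ⟨j0, hj0⟩ := hall
    exact Finset.prod_eq_zero (Finset.mem_univ j0) (if_neg hj0)

lemma poly_eq {Fq : Type} [Field Fq] (d : ℕ) (c : Fin d → Fq) :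
    X ^ d + ∑ i : Fin d, C (c i) * X ^ (i : ℕ) =
      ∑ i : Fin (d + 1), C (if h : (i : ℕ) < d then c ⟨i, h⟩ else 1) * X ^ (i : ℕ) := by
  rw [Fin.sum_univ_castSucc]
  simp [Fin.is_lt, add_comm]

lemma charFq (p f : ℕ) (hp : p.Prime) (Fq : Type) [Field Fq] [Fintype Fq]
    (hcard : Fintype.card Fq = p ^ f) : CharP Fq p := by
  have h0 : ((p ^ f : ℕ) : Fq) = 0 := by rw [← hcard]; exact FiniteField.cast_card_eq_zero Fq
  have hdvd : ringChar Fq ∣ p ^ f := ringChar.dvd h0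
  have hrprime : (ringChar Fq).Prime := CharP.char_is_prime Fq (ringChar Fq)
  have hre : ringChar Fq = p :=
    (Nat.prime_dvd_prime_iff_eq hrprime hp).mp (hrprime.dvd_of_dvd_pow hdvd)
  rw [← hre]; exact ringChar.charP Fq

end Helpers

/-- `S_d(s) = (-1)^d ∑_{m ∈ U_d(-s)} multinomial(m) t^{wt m}`, and every
multinomial coefficient occurring there is nonzero mod `p` (Lucas). -/


theorem powerSum_expansion
    (p f : ℕ) (hp : p.Prime) (hf : 0 < f)
    (Fq : Type) [Field Fq] [Fintype Fq] (hcard : Fintype.card Fq = p ^ f)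
    (d k : ℕ) (hk : 0 < k) :
    (powerSum Fq d k =
      (-1 : Polynomial Fq) ^ d *
        ∑ᶠ (m : Fin (d + 1) → ℕ) (_ : m ∈ Uset p (p ^ f) d k),
          (Nat.multinomial Finset.univ m : Polynomial Fq) * Polynomial.X ^ wtU m) ∧
    ∀ m ∈ Uset p (p ^ f) d k, (Nat.multinomial Finset.univ m : Fq) ≠ 0 := by
  classical
  haveI hcharP : CharP Fq p := charFq p f hp Fq hcard
  set q := p ^ f with hqdef
  have claim2 : ∀ m ∈ Uset p q d k, (Nat.multinomial Finset.univ m : Fq) ≠ 0 := by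
    intro m hm
    obtain ⟨hnc, hpos⟩ := hm
    have hnd : ¬ p ∣ Nat.multinomial Finset.univ m :=
      (mult_iff_noCarry p hp m k hnc.1).mpr hnc
    rw [Ne, CharP.cast_eq_zero_iff Fq p]
    exact hnd
  refine ⟨?_, claim2⟩
  set a : (Fin d → Fq) → Fin (d + 1) → Fq :=
    fun c i => if h : (i : ℕ) < d then c ⟨i, h⟩ else 1 with ha
  set T : Finset (Fin (d + 1) → ℕ) := Finset.piAntidiag Finset.univ k with hT
  set wt' : (Fin (d + 1) → ℕ) → ℕ := fun n => ∑ i : Fin (d + 1), (i : ℕ) * n i with hwt'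
  have expand : powerSum Fq d k = ∑ n ∈ T, (Nat.multinomial Finset.univ n : Polynomial Fq) *
      (C (∑ c : Fin d → Fq, ∏ i : Fin (d + 1), (a c i) ^ (n i)) * X ^ wt' n) := by
    rw [powerSum]
    have h1 : ∀ c : Fin d → Fq, (X ^ d + ∑ i : Fin d, C (c i) * X ^ (i : ℕ)) ^ k =
        ∑ n ∈ T, (Nat.multinomial Finset.univ n : Polynomial Fq) *
          (C (∏ i, (a c i) ^ n i) * X ^ wt' n) := by
      intro c
      rw [poly_eq d c, Finset.sum_pow_eq_sum_piAntidiag]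
      refine Finset.sum_congr rfl fun n hn => ?_
      congr 1
      calc ∏ i, (C (a c i) * X ^ (i : ℕ)) ^ n i
          = ∏ i, (C ((a c i) ^ n i) * X ^ ((i : ℕ) * n i)) := by
            refine Finset.prod_congr rfl fun i _ => ?_
            rw [mul_pow, ← C_pow, ← pow_mul]
        _ = C (∏ i, (a c i) ^ n i) * X ^ wt' n := by
            rw [Finset.prod_mul_distrib, ← map_prod, Finset.prod_pow_eq_pow_sum]
    rw [Finset.sum_congr rfl fun c _ => h1 c, Finset.sum_comm]
    refine Finset.sum_congr rfl fun n _ => ?_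
    rw [← Finset.mul_sum, ← Finset.sum_mul, ← map_sum C]
  have inner : ∀ n : Fin (d + 1) → ℕ,
      (∑ c : Fin d → Fq, ∏ i, (a c i) ^ (n i)) =
        if (∀ j : Fin d, n (Fin.castSucc j) ≠ 0 ∧ (q - 1) ∣ n (Fin.castSucc j))
          then (-1 : Fq) ^ d else 0 := by
    intro n
    have h2 : ∀ c : Fin d → Fq, ∏ i : Fin (d + 1), (a c i) ^ n i
        = ∏ j : Fin d, (c j) ^ n (Fin.castSucc j) := by
      intro c
      rw [Fin.prod_univ_castSucc]
      have hl : a c (Fin.last d) = 1 := dif_neg (lt_irrefl d)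
      rw [hl, one_pow, mul_one]
      refine Finset.prod_congr rfl fun j _ => ?_
      congr 1
      simp [ha, Fin.is_lt]
    simp_rw [h2]
    rw [← Fintype.prod_sum (fun (j : Fin d) (x : Fq) => x ^ n (Fin.castSucc j))]
    rw [Finset.prod_congr rfl fun j _ => charSum Fq (n (Fin.castSucc j))]
    simp_rw [hcard]
    exact prod_ite_eq_pow _
  set Q : (Fin (d + 1) → ℕ) → Prop := fun n =>
    (∀ j : Fin d, n (Fin.castSucc j) ≠ 0 ∧ (q - 1) ∣ n (Fin.castSucc j)) ∧
      ¬ p ∣ Nat.multinomial Finset.univ n with hQ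
  have step3 : powerSum Fq d k = ∑ n ∈ T.filter Q,
      (-1 : Polynomial Fq) ^ d * ((Nat.multinomial Finset.univ n : Polynomial Fq) * X ^ wt' n) := by
    rw [expand, Finset.sum_filter]
    refine Finset.sum_congr rfl fun n hn => ?_
    rw [inner n]
    by_cases h1 : ∀ j : Fin d, n (Fin.castSucc j) ≠ 0 ∧ (q - 1) ∣ n (Fin.castSucc j)
    · rw [if_pos h1]
      by_cases h2 : p ∣ Nat.multinomial Finset.univ n
      · rw [if_neg (fun hQn => hQn.2 h2)]
        have hz : ((Nat.multinomial Finset.univ n : Fq)) = 0 :=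
          (CharP.cast_eq_zero_iff Fq p _).mpr h2
        have hz' : ((Nat.multinomial Finset.univ n : Polynomial Fq)) = 0 := by
          rw [← map_natCast (C : Fq →+* Polynomial Fq), hz, map_zero]
        rw [hz']; ring
      · rw [if_pos ⟨h1, h2⟩, map_pow, map_neg, map_one]; ring
    · rw [if_neg h1, if_neg (fun hQn => h1 hQn.1), map_zero]; ring
  have hsub : Uset p q d k ⊆ ↑T := by
    intro m hm
    simp only [hT, Finset.mem_coe, Finset.mem_piAntidiag]
    exact ⟨hm.1.1, fun i _ => Finset.mem_univ i⟩
  have hUfin : (Uset p q d k).Finite := Set.Finite.subset T.finite_toSet hsub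
  rw [step3, finsum_mem_eq_finite_toFinset_sum _ hUfin, Finset.mul_sum]
  -- reindexing by Fin.rev
  have sumrev : ∀ g : Fin (d + 1) → ℕ, (∑ i, g (Fin.rev i)) = ∑ i, g i := fun g =>
    Fintype.sum_equiv Fin.revPerm _ _ fun i => rfl
  have hvalrev : ∀ i : Fin (d + 1), ((Fin.rev i : Fin (d + 1)) : ℕ) = d - (i : ℕ) := by
    intro i
    have := i.isLt
    simp only [Fin.val_rev]
    omega
  have hwt : ∀ nn : Fin (d + 1) → ℕ, wtU (nn ∘ Fin.rev) = wt' nn := by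
    intro nn
    show (∑ i : Fin (d + 1), (d - (i : ℕ)) * (nn ∘ Fin.rev) i) = ∑ i : Fin (d + 1), (i : ℕ) * nn i
    refine Fintype.sum_equiv Fin.revPerm _ _ fun i => ?_
    simp only [Fin.revPerm_apply, Function.comp_apply, hvalrev]
  have hmultrev : ∀ nn : Fin (d + 1) → ℕ,
      Nat.multinomial Finset.univ (nn ∘ Fin.rev) = Nat.multinomial Finset.univ nn :=
    fun nn => multinomial_comp_equiv nn Fin.revPerm
  have hncrev : ∀ nn : Fin (d + 1) → ℕ, NoCarry p (nn ∘ Fin.rev) k ↔ NoCarry p nn k := by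
    intro nn
    unfold NoCarry
    rw [show (∑ i, (nn ∘ Fin.rev) i) = ∑ i, nn i from sumrev nn]
    refine and_congr Iff.rfl (forall_congr' fun j => ?_)
    rw [show (∑ i, (nn ∘ Fin.rev) i / p ^ j % p) = ∑ i, nn i / p ^ j % p from
      sumrev (fun i => nn i / p ^ j % p)]
  refine Finset.sum_nbij' (fun n => n ∘ Fin.rev) (fun m => m ∘ Fin.rev) ?_ ?_ ?_ ?_ ?_
  · intro n hn
    rw [Finset.mem_filter] at hn
    obtain ⟨hnT, hQ1, hQ2⟩ := hn
    rw [hT, Finset.mem_piAntidiag] at hnT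
    have hsumn : (∑ i, n i) = k := hnT.1
    have hncn : NoCarry p n k := (mult_iff_noCarry p hp n k hsumn).mp hQ2
    rw [Set.Finite.mem_toFinset]
    refine ⟨(hncrev n).mpr hncn, ?_⟩
    intro i hi
    have hlt : ((Fin.rev i : Fin (d + 1)) : ℕ) < d := by
      rw [hvalrev]; have := i.isLt; omega
    have hcs : Fin.castSucc (⟨((Fin.rev i : Fin (d + 1)) : ℕ), hlt⟩ : Fin d) = Fin.rev i := by
      apply Fin.ext; simp
    have hthis := hQ1 ⟨((Fin.rev i : Fin (d + 1)) : ℕ), hlt⟩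
    rw [hcs] at hthis
    exact ⟨Nat.pos_of_ne_zero hthis.1, hthis.2⟩
  · intro m hm
    rw [Set.Finite.mem_toFinset] at hm
    obtain ⟨hnc, hpos⟩ := hm
    rw [Finset.mem_filter]
    refine ⟨?_, ?_, ?_⟩
    · rw [hT, Finset.mem_piAntidiag]
      exact ⟨(sumrev m).trans hnc.1, fun i _ => Finset.mem_univ i⟩
    · intro j
      have h0 : 0 < ((Fin.rev (Fin.castSucc j) : Fin (d + 1)) : ℕ) := by
        rw [hvalrev]
        have := j.isLt
        simp only [Fin.coe_castSucc]
        omega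
      obtain ⟨h1, h2⟩ := hpos _ h0
      exact ⟨h1.ne', h2⟩
    · rw [hmultrev m]
      exact (mult_iff_noCarry p hp m k hnc.1).mpr hnc
  · intro n _; funext i; simp [Function.comp, Fin.rev_rev]
  · intro m _; funext i; simp [Function.comp, Fin.rev_rev]
  · intro n _
    rw [hmultrev n, hwt n]
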